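/- For n ≥ 2, the cokernel of the ℤ-linear map given by the n×n matrix n·E_n − J_n is isomorphic to ℤ ⊕ (ℤ/nℤ)^(n−2). -/

import Mathlib

open Matrix

/-- The all-ones matrix. -/
def Jmat (n : ℕ) : Matrix (Fin n) (Fin n) ℤ := Matrix.of fun _ _ => 1

/-- Index equivalence splitting `Fin n` into the first two indices and the rest. -/
def Emap (n : ℕ) (hn : 2 ≤ n) : Fin 2 ⊕ Fin (n - 2) ≃ Fin n :=
  finSumFinEquiv.trans (finCongr (by omega))

/-- The comparison map. -/
def psi (n : ℕ) (hn : 2 ≤ n) : (Fin n → ℤ) →ₗ[ℤ] ℤ × (Fin (n - 2) → ZMod n) where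
  toFun y := (∑ j, y j,
    fun i => ((y (Emap n hn (.inr i)) - y (Emap n hn (.inl 1)) : ℤ) : ZMod n))
  map_add' y z := by
    ext
    · simp [Finset.sum_add_distrib]
    · simp only [Prod.snd_add, Pi.add_apply]
      push_cast
      ring
  map_smul' c y := by
    ext
    · simp [Finset.mul_sum]
    · simp only [Prod.smul_snd, Pi.smul_apply, RingHom.id_apply]
      simp only [smul_eq_mul, zsmul_eq_mul]
      push_cast
      ring
  
lemma mulVec_apply (n : ℕ) (x : Fin n → ℤ) (j : Fin n) :
    Matrix.mulVecLin ((n : ℤ) • (1 : Matrix (Fin n) (Fin n) ℤ) - Jmat n) x j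
      = n * x j - ∑ i, x i := by
  rw [Matrix.mulVecLin_apply, Matrix.sub_mulVec, Matrix.smul_mulVec, Matrix.one_mulVec]
  simp [Jmat, Matrix.mulVec, dotProduct, smul_eq_mul]

lemma ker_eq (n : ℕ) (hn : 2 ≤ n) :
    LinearMap.ker (psi n hn) = LinearMap.range
      (Matrix.mulVecLin ((n : ℤ) • (1 : Matrix (Fin n) (Fin n) ℤ) - Jmat n)) := by
  have hn0 : (n : ℤ) ≠ 0 := by exact_mod_cast (by omega : n ≠ 0)
  ext y
  simp only [LinearMap.mem_ker, LinearMap.mem_range, psi, LinearMap.coe_mk, AddHom.coe_mk,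
    Prod.mk_eq_zero]
  constructor
  · rintro ⟨hsum, hmod'⟩
    have hmod : ∀ s : Fin (n - 2),
        ((y (Emap n hn (.inr s)) - y (Emap n hn (.inl 1)) : ℤ) : ZMod n) = 0 :=
      fun s => congrFun hmod' s
    set b := Emap n hn (.inl 1) with hb
    have hsplit : ∑ s : Fin 2 ⊕ Fin (n - 2), (y (Emap n hn s) - y b)
        = ∑ j, (y j - y b) :=
      Fintype.sum_equiv (Emap n hn) _ _ (fun _ => rfl)
    have htot : ∑ j, (y j - y b) = -(n * y b) := by
      rw [Finset.sum_sub_distrib, hsum]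
      simp [Finset.card_univ, mul_comm]
    have heq : y (Emap n hn (.inl 0)) - y b
        = ∑ j, (y j - y b) - ∑ s : Fin (n - 2), (y (Emap n hn (.inr s)) - y b) := by
      rw [← hsplit, Fintype.sum_sum_type, Fin.sum_univ_two]
      simp [hb]
    have hdvd : ∀ i : Fin n, (n : ℤ) ∣ (y i - y b) := by
      intro i
      rcases h : (Emap n hn).symm i with s | s
      · have hi : i = Emap n hn (.inl s) := by
          rw [← h, Equiv.apply_symm_apply]
        rw [hi]
        fin_cases s
        · show (n : ℤ) ∣ y (Emap n hn (.inl 0)) - y b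
          rw [heq, htot]
          refine dvd_sub ⟨-(y b), by ring⟩ (Finset.dvd_sum fun s _ => ?_)
          exact (ZMod.intCast_zmod_eq_zero_iff_dvd _ n).mp (hmod s)
        · show (n : ℤ) ∣ y (Emap n hn (.inl 1)) - y b
          simp [hb]
      · have hi : i = Emap n hn (.inr s) := by
          rw [← h, Equiv.apply_symm_apply]
        rw [hi]
        exact (ZMod.intCast_zmod_eq_zero_iff_dvd _ n).mp (hmod s)
    refine ⟨fun i => (y i - y b) / n, funext fun j => ?_⟩
    have hx : ∀ i, (n : ℤ) * ((y i - y b) / n) = y i - y b :=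
      fun i => Int.mul_ediv_cancel' (hdvd i)
    have hsx : ∑ i, (y i - y b) / n = -(y b) := by
      apply mul_left_cancel₀ hn0
      rw [Finset.mul_sum]
      simp only [hx]
      rw [htot]; ring
    rw [_root_.mulVec_apply, hsx, hx]
    ring
  · rintro ⟨x, rfl⟩
    constructor
    · simp only [_root_.mulVec_apply]
      rw [Finset.sum_sub_distrib, ← Finset.mul_sum, Finset.sum_const, Finset.card_univ,
        Fintype.card_fin, nsmul_eq_mul]
      ring
    · funext i
      simp only [_root_.mulVec_apply, Pi.zero_apply]
      push_cast
      rw [ZMod.natCast_self]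
      ring

lemma psi_surj (n : ℕ) (hn : 2 ≤ n) : Function.Surjective (psi n hn) := by
  haveI : NeZero n := ⟨by omega⟩
  rintro ⟨t, z⟩
  refine ⟨fun j => Sum.elim ![t - ∑ i, ((z i).val : ℤ), 0]
      (fun i => ((z i).val : ℤ)) ((Emap n hn).symm j), ?_⟩
  simp only [psi, LinearMap.coe_mk, AddHom.coe_mk, Prod.mk.injEq]
  constructor
  · rw [← Fintype.sum_equiv (Emap n hn)
      (fun s => Sum.elim ![t - ∑ i, ((z i).val : ℤ), 0]
        (fun i => ((z i).val : ℤ)) ((Emap n hn).symm (Emap n hn s)))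
      (fun j => Sum.elim ![t - ∑ i, ((z i).val : ℤ), 0]
        (fun i => ((z i).val : ℤ)) ((Emap n hn).symm j)) (fun _ => rfl)]
    simp only [Equiv.symm_apply_apply, Fintype.sum_sum_type, Fin.sum_univ_two]
    simp
  · funext i
    simp [Equiv.symm_apply_apply, ZMod.intCast_cast, ZMod.natCast_val, ZMod.cast_id]

theorem stmt4 (n : ℕ) (hn : 2 ≤ n) :
    Nonempty (((Fin n → ℤ) ⧸ LinearMap.range
        (Matrix.mulVecLin ((n : ℤ) • (1 : Matrix (Fin n) (Fin n) ℤ) - Jmat n)))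
      ≃ₗ[ℤ] ℤ × (Fin (n - 2) → ZMod n)) := by
  rw [← ker_eq n hn]
  exact ⟨LinearMap.quotKerEquivOfSurjective _ (psi_surj n hn)⟩
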